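/- For the specific splitting F_c(φ) = (1/(4η²))(φ⁴ − 2φ³ + (3/2)φ²) and F_e(φ) = −(1/(8η²))φ² with η > 0, for all real a, b one has (F_c'(b) + F_e'(a))·(b − a) ≥ F(b) − F(a), where F(φ) = (1/(4η²))φ²(1−φ)². -/

import Mathlib

theorem eyre_inequality_double_well (η : ℝ) (hη : 0 < η) (a b : ℝ) :
    letI F : ℝ → ℝ := fun φ => (1 / (4 * η^2)) * φ^2 * (1 - φ)^2
    letI Fc : ℝ → ℝ := fun φ => (1 / (4 * η^2)) * (φ^4 - 2*φ^3 + (3/2)*φ^2)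
    letI Fe : ℝ → ℝ := fun φ => -(1 / (8 * η^2)) * φ^2
    (deriv Fc b + deriv Fe a) * (b - a) ≥ F b - F a := by
  simp only
  have hη2 : (0:ℝ) < η^2 := by positivity
  have hFc : deriv (fun φ : ℝ => (1 / (4 * η^2)) * (φ^4 - 2*φ^3 + (3/2)*φ^2)) b = (1 / (4 * η^2)) * (4*b^3 - 6*b^2 + 3*b) := by
    have h : HasDerivAt (fun φ : ℝ => (1 / (4 * η^2)) * (φ^4 - 2*φ^3 + (3/2)*φ^2))
        ((1 / (4 * η^2)) * (4*b^3 - 6*b^2 + 3*b)) b := by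
      have := (((hasDerivAt_pow 4 b).sub ((hasDerivAt_pow 3 b).const_mul 2)).add
        ((hasDerivAt_pow 2 b).const_mul (3/2))).const_mul (1 / (4 * η^2))
      exact this.congr_deriv (by push_cast; ring)
    exact h.deriv
  have hFe : deriv (fun φ : ℝ => -(1 / (8 * η^2)) * φ^2) a = -(1 / (8 * η^2)) * (2*a) := by
    have h : HasDerivAt (fun φ : ℝ => -(1 / (8 * η^2)) * φ^2)
        (-(1 / (8 * η^2)) * (2*a)) a := by
      have := (hasDerivAt_pow 2 a).const_mul (-(1 / (8 * η^2)))
      exact this.congr_deriv (by norm_num)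
    exact h.deriv
  rw [hFc, hFe]
  have hnn : (4*b^3 - 6*b^2 + 3*b - a) * (b - a) ≥ b^2*(1-b)^2 - a^2*(1-a)^2 := by
    nlinarith [sq_nonneg (b - a), sq_nonneg (b + a - 1), sq_nonneg (b*(b-a)), sq_nonneg ((b-a)*(b+a-1)), sq_nonneg (b^2 - a^2)]
  have expand : ((1 / (4 * η^2)) * (4*b^3 - 6*b^2 + 3*b) + -(1 / (8 * η^2)) * (2*a)) * (b - a)
      - ((1 / (4 * η^2)) * b^2 * (1 - b)^2 - (1 / (4 * η^2)) * a^2 * (1 - a)^2) = (1 / (4 * η^2)) * ((4*b^3 - 6*b^2 + 3*b - a) * (b - a) - (b^2*(1-b)^2 - a^2*(1-a)^2)) := by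
    field_simp
    ring
  have : (1 / (4 * η^2)) * ((4*b^3 - 6*b^2 + 3*b - a) * (b - a) - (b^2*(1-b)^2 - a^2*(1-a)^2)) ≥ 0 := by
    apply mul_nonneg (by positivity)
    linarith
  linarith [expand ▸ this]
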